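/- Let Ĝ be a directed graph, U₁, U₂ subsets of its vertices, and s a vertex not in U₁ ∪ U₂. Let X₁ be a set of ℓ₁ directed paths from U₁ to s that are pairwise vertex-disjoint except for sharing s, and let X₂ be a set of ℓ₂ such paths from U₂ to s, with ℓ₁ > ℓ₂ ≥ 1. Then there is a set X' of ℓ₁ paths from U₁ ∪ U₂ to s, pairwise vertex-disjoint except at s, together with a partition (X'₁, X'₂) of X' such that |X'₂| = ℓ₂, every path of X'₂ originates in U₂, and X'₁ ⊆ X₁. -/

import Mathlib

attribute [local instance] Classical.propDecidable

noncomputable section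

private lemma split_unique {V : Type} {w : V} :
    ∀ {l₁ l₂ r₁ r₂ : List V}, (l₁ ++ w :: r₁).Nodup →
      l₁ ++ w :: r₁ = l₂ ++ w :: r₂ → l₁ = l₂ ∧ r₁ = r₂ := by
  intro l₁
  induction l₁ with
  | nil =>
    intro l₂ r₁ r₂ hn he
    cases l₂ with
    | nil => simpa using he
    | cons b t =>
      exfalso
      simp only [List.nil_append, List.cons_append, List.cons.injEq] at he
      obtain ⟨rfl, rfl⟩ := he
      simp only [List.nil_append, List.nodup_cons] at hn
      exact hn.1 (by simp)
  | cons a t ih =>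
    intro l₂ r₁ r₂ hn he
    cases l₂ with
    | nil =>
      exfalso
      simp only [List.cons_append, List.nil_append, List.cons.injEq] at he
      obtain ⟨rfl, rfl⟩ := he
      simp only [List.cons_append, List.nodup_cons] at hn
      exact hn.1 (by simp)
    | cons b t₂ =>
      simp only [List.cons_append, List.cons.injEq] at he
      obtain ⟨rfl, he2⟩ := he
      have hn' : (t ++ w :: r₁).Nodup := by
        simpa using (List.nodup_cons.mp (by simpa using hn)).2
      obtain ⟨rfl, rfl⟩ := ih hn' he2
      exact ⟨rfl, rfl⟩
private lemma reroute_main {V : Type} (D : V → V → Prop) (U₁ U₂ : Set V) (s : V)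
    (hs : s ∉ U₁ ∪ U₂)
    (X₁ : Finset (List V)) (ℓ₁ ℓ₂ : ℕ) (hX₁card : X₁.card = ℓ₁)
    (hX₁ : ∀ l ∈ X₁, l.Chain' D ∧ l.Nodup ∧
      (∃ u ∈ U₁, l.head? = some u) ∧ l.getLast? = some s)
    (hnd₁ : ∀ l ∈ X₁, ∀ l' ∈ X₁, l ≠ l' → ∀ x, x ∈ l → x ∈ l' → x = s)
    (hX₁ne : X₁.Nonempty) :
    ∀ (m : ℕ) (C Dp : Finset (List V)),
      C ⊆ X₁ → C.card + ℓ₂ ≤ ℓ₁ → Dp.card = ℓ₂ →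
      (∀ l ∈ Dp, l.Chain' D ∧ l.Nodup ∧
        (∃ u ∈ U₂, l.head? = some u) ∧ l.getLast? = some s) →
      (∀ l ∈ Dp, ∀ l' ∈ Dp, l ≠ l' → ∀ x, x ∈ l → x ∈ l' → x = s) →
      (∀ l ∈ C, ∀ l' ∈ Dp, ∀ x, x ∈ l → x ∈ l' → x = s) →
      (ℓ₁ - ℓ₂ - C.card) + (∑ Q ∈ Dp, sInf {n | ∃ R ∈ X₁, Q.drop n <:+ R}) ≤ m →
      ∃ X'₁ X'₂ : Finset (List V),
        Disjoint X'₁ X'₂ ∧ (X'₁ ∪ X'₂).card = ℓ₁ ∧ X'₂.card = ℓ₂ ∧ X'₁ ⊆ X₁ ∧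
        (∀ l ∈ X'₂, ∃ u ∈ U₂, l.head? = some u) ∧
        (∀ l ∈ X'₁ ∪ X'₂, l.Chain' D ∧ l.Nodup ∧
          (∃ u ∈ U₁ ∪ U₂, l.head? = some u) ∧ l.getLast? = some s) ∧
        (∀ l ∈ X'₁ ∪ X'₂, ∀ l' ∈ X'₁ ∪ X'₂, l ≠ l' → ∀ x, x ∈ l → x ∈ l' → x = s) := by
  -- the assembling step, used when `C.card + ℓ₂ = ℓ₁`
  have assemble : ∀ (C Dp : Finset (List V)),
      C ⊆ X₁ → C.card + ℓ₂ = ℓ₁ → Dp.card = ℓ₂ →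
      (∀ l ∈ Dp, l.Chain' D ∧ l.Nodup ∧
        (∃ u ∈ U₂, l.head? = some u) ∧ l.getLast? = some s) →
      (∀ l ∈ Dp, ∀ l' ∈ Dp, l ≠ l' → ∀ x, x ∈ l → x ∈ l' → x = s) →
      (∀ l ∈ C, ∀ l' ∈ Dp, ∀ x, x ∈ l → x ∈ l' → x = s) →
      ∃ X'₁ X'₂ : Finset (List V),
        Disjoint X'₁ X'₂ ∧ (X'₁ ∪ X'₂).card = ℓ₁ ∧ X'₂.card = ℓ₂ ∧ X'₁ ⊆ X₁ ∧
        (∀ l ∈ X'₂, ∃ u ∈ U₂, l.head? = some u) ∧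
        (∀ l ∈ X'₁ ∪ X'₂, l.Chain' D ∧ l.Nodup ∧
          (∃ u ∈ U₁ ∪ U₂, l.head? = some u) ∧ l.getLast? = some s) ∧
        (∀ l ∈ X'₁ ∪ X'₂, ∀ l' ∈ X'₁ ∪ X'₂, l ≠ l' → ∀ x, x ∈ l → x ∈ l' → x = s) := by
    intro C Dp h1 h2 h3 h4 h5 h6
    have hdisj : Disjoint C Dp := by
      rw [Finset.disjoint_left]
      intro l hlC hlD
      obtain ⟨_, _, ⟨u, huU₂, hu⟩, _⟩ := h4 l hlD
      have humem : u ∈ l := List.mem_of_mem_head? (by rw [hu]; rfl)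
      have := h6 l hlC l hlD u humem humem
      exact hs (Or.inr (this ▸ huU₂))
    refine ⟨C, Dp, hdisj, ?_, h3, h1, fun l hl => (h4 l hl).2.2.1, ?_, ?_⟩
    · rw [Finset.card_union_of_disjoint hdisj, h3, h2]
    · intro l hl
      rcases Finset.mem_union.mp hl with hC | hD
      · obtain ⟨hc, hn, ⟨u, hu1, hu2⟩, hlast⟩ := hX₁ l (h1 hC)
        exact ⟨hc, hn, ⟨u, Or.inl hu1, hu2⟩, hlast⟩
      · obtain ⟨hc, hn, ⟨u, hu1, hu2⟩, hlast⟩ := h4 l hD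
        exact ⟨hc, hn, ⟨u, Or.inr hu1, hu2⟩, hlast⟩
    · intro l hl l' hl' hne x hxl hxl'
      rcases Finset.mem_union.mp hl with hC | hD <;>
        rcases Finset.mem_union.mp hl' with hC' | hD'
      · exact hnd₁ l (h1 hC) l' (h1 hC') hne x hxl hxl'
      · exact h6 l hC l' hD' x hxl hxl'
      · exact h6 l' hC' l hD x hxl' hxl
      · exact h5 l hD l' hD' hne x hxl hxl'
  intro m
  induction m with
  | zero =>
    intro C Dp h1 h2 h3 h4 h5 h6 hm
    have h0 : ℓ₁ - ℓ₂ - C.card = 0 := by omega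
    exact assemble C Dp h1 (by omega) h3 h4 h5 h6
  | succ m ih =>
    intro C Dp h1 h2 h3 h4 h5 h6 hm
    by_cases hfin : C.card + ℓ₂ = ℓ₁
    · exact assemble C Dp h1 hfin h3 h4 h5 h6
    have hlt : C.card + ℓ₂ < ℓ₁ := lt_of_le_of_ne h2 hfin
    -- there is a leg outside C that is not "ridden"
    have hex : ∃ R ∈ X₁ \ C,
        ¬ ∃ Q, Q ∈ Dp ∧ ∃ v t, v ≠ s ∧ (v :: t) <:+ Q ∧ (v :: t) <:+ R := by
      by_contra hno
      push_neg at hno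
      have hridden : ∀ R ∈ X₁ \ C,
          ∃ Q, Q ∈ Dp ∧ ∃ v t, v ≠ s ∧ (v :: t) <:+ Q ∧ (v :: t) <:+ R := by
        intro R hR
        simpa using hno R hR
      classical
      set f : List V → List V := fun R =>
        if h : ∃ Q, Q ∈ Dp ∧ ∃ v t, v ≠ s ∧ (v :: t) <:+ Q ∧ (v :: t) <:+ R
        then h.choose else R with hf
      have hcard_le : (X₁ \ C).card ≤ Dp.card := by
        apply Finset.card_le_card_of_injOn f
        · intro R hR
          have h := hridden R hR
          simp only [hf, dif_pos h]
          exact h.choose_spec.1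
        · intro R₁ hR₁' R₂ hR₂' heq
          have hR₁ := hridden R₁ (by simpa using hR₁')
          have hR₂ := hridden R₂ (by simpa using hR₂')
          by_contra hne
          have e₁ : f R₁ = hR₁.choose := dif_pos hR₁
          have e₂ : f R₂ = hR₂.choose := dif_pos hR₂
          obtain ⟨hQ₁Dp, v₁, t₁, hv₁s, hsq₁, hsr₁⟩ := hR₁.choose_spec
          obtain ⟨hQ₂Dp, v₂, t₂, hv₂s, hsq₂, hsr₂⟩ := hR₂.choose_spec
          have hQeq : hR₁.choose = hR₂.choose := by rw [← e₁, ← e₂, heq]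
          rw [hQeq] at hsq₁
          have hmemR₁ : v₁ ∈ R₁ := hsr₁.mem (by simp)
          have hmemR₂ : v₂ ∈ R₂ := hsr₂.mem (by simp)
          have hR₁X₁ : R₁ ∈ X₁ := (Finset.mem_sdiff.mp (by simpa using hR₁')).1
          have hR₂X₁ : R₂ ∈ X₁ := (Finset.mem_sdiff.mp (by simpa using hR₂')).1
          rcases List.suffix_or_suffix_of_suffix hsq₁ hsq₂ with hss | hss
          · have : v₁ ∈ R₂ := hsr₂.mem (hss.mem (by simp))
            exact hv₁s (hnd₁ R₁ hR₁X₁ R₂ hR₂X₁ hne v₁ hmemR₁ this)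
          · have : v₂ ∈ R₁ := hsr₁.mem (hss.mem (by simp))
            exact hv₂s (hnd₁ R₂ hR₂X₁ R₁ hR₁X₁ (Ne.symm hne) v₂ hmemR₂ this)
      rw [Finset.card_sdiff_of_subset h1, hX₁card, h3] at hcard_le
      omega
    obtain ⟨R', hR'mem, hnotridden⟩ := hex
    have hR'X₁ : R' ∈ X₁ := (Finset.mem_sdiff.mp hR'mem).1
    have hR'nC : R' ∉ C := (Finset.mem_sdiff.mp hR'mem).2
    obtain ⟨hR'chain, hR'nodup, hR'head, hR'last⟩ := hX₁ R' hR'X₁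
    by_cases hunhit : ∀ x ∈ R', x ≠ s → ∀ Q ∈ Dp, x ∉ Q
    · -- Case A : add R' to C
      refine ih (insert R' C) Dp (Finset.insert_subset hR'X₁ h1) ?_ h3 h4 h5 ?_ ?_
      · rw [Finset.card_insert_of_notMem hR'nC]; omega
      · intro l hl l' hl' x hxl hxl'
        rcases Finset.mem_insert.mp hl with rfl | hlC
        · by_contra hxs
          exact hunhit x hxl hxs l' hl' hxl'
        · exact h6 l hlC l' hl' x hxl hxl'
      · rw [Finset.card_insert_of_notMem hR'nC]
        have hmeas := hm
        omega
    · -- Case B : reroute the path owning the deepest hit on R'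
      push_neg at hunhit
      obtain ⟨x₀, hx₀R, hx₀s, hx₀hit⟩ := hunhit
      set p : V → Prop := fun x => x ≠ s ∧ ∃ Q ∈ Dp, x ∈ Q with hp
      have hx₀p : p x₀ := ⟨hx₀s, hx₀hit⟩
      set F := R'.filter (fun x => decide (p x)) with hF
      have hx₀F : x₀ ∈ F := List.mem_filter.mpr ⟨hx₀R, by simpa using hx₀p⟩
      have hFne : F ≠ [] := List.ne_nil_of_mem hx₀F
      set w := F.getLast hFne with hw
      have hwF : w ∈ F := List.getLast_mem hFne
      have hwR : w ∈ R' := (List.mem_filter.mp hwF).1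
      have hpw : p w := by
        have := (List.mem_filter.mp hwF).2
        simpa using this
      obtain ⟨hws, Q₀, hQ₀Dp, hwQ₀⟩ := hpw
      obtain ⟨rpre, rsuf, hRsplit⟩ := List.append_of_mem hwR
      obtain ⟨qpre, qsuf, hQsplit⟩ := List.append_of_mem hwQ₀
      obtain ⟨hQ₀chain, hQ₀nodup, hQ₀head, hQ₀last⟩ := h4 Q₀ hQ₀Dp
      have hR'nodup' : (rpre ++ w :: rsuf).Nodup := hRsplit ▸ hR'nodup
      have hQ₀nodup' : (qpre ++ w :: qsuf).Nodup := hQsplit ▸ hQ₀nodup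
      -- the deepest-hit property
      have hstar : ∀ x ∈ rsuf, x = s ∨ ∀ Q ∈ Dp, x ∉ Q := by
        intro x hx
        by_contra hcon
        push_neg at hcon
        obtain ⟨hxs, Q, hQ, hxQ⟩ := hcon
        have hpx : p x := ⟨hxs, Q, hQ, hxQ⟩
        have hxfil : x ∈ rsuf.filter (fun x => decide (p x)) :=
          List.mem_filter.mpr ⟨hx, by simpa using hpx⟩
        have hfilne : rsuf.filter (fun x => decide (p x)) ≠ [] := List.ne_nil_of_mem hxfil
        have hFdecomp : F = rpre.filter (fun x => decide (p x)) ++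
            w :: rsuf.filter (fun x => decide (p x)) := by
          have hpw' : p w := ⟨hws, Q₀, hQ₀Dp, hwQ₀⟩
          rw [hF, hRsplit, List.filter_append, List.filter_cons, if_pos (by simpa using hpw')]
        have hlw : F.getLast? = some w := by
          rw [hw]; exact List.getLast?_eq_getLast hFne
        rw [hFdecomp, List.getLast?_append_of_ne_nil _ (List.cons_ne_nil _ _)] at hlw
        have : (w :: rsuf.filter (fun x => decide (p x))).getLast? =
            (rsuf.filter (fun x => decide (p x))).getLast? := by
          have : w :: rsuf.filter (fun x => decide (p x)) =
              [w] ++ rsuf.filter (fun x => decide (p x)) := by simp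
          rw [this, List.getLast?_append_of_ne_nil _ hfilne]
        rw [this] at hlw
        have hwrsuf : w ∈ rsuf := by
          have := List.mem_of_getLast? hlw
          exact (List.mem_filter.mp this).1
        have hnodup_wrsuf : (w :: rsuf).Nodup := hR'nodup'.of_append_right
        exact (List.nodup_cons.mp hnodup_wrsuf).1 hwrsuf
      have hrsufne : rsuf ≠ [] := by
        intro h
        subst h
        rw [hRsplit] at hR'last
        rw [List.getLast?_append_of_ne_nil _ (List.cons_ne_nil _ _)] at hR'last
        simp at hR'last
        exact hws hR'last
      have hlast_wrsuf : (w :: rsuf).getLast? = some s := by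
        rw [hRsplit, List.getLast?_append_of_ne_nil _ (List.cons_ne_nil _ _)] at hR'last
        exact hR'last
      have hlast_wqsuf : (w :: qsuf).getLast? = some s := by
        rw [hQsplit, List.getLast?_append_of_ne_nil _ (List.cons_ne_nil _ _)] at hQ₀last
        exact hQ₀last
      have hsnqpre : s ∉ qpre := by
        intro hsq
        have hs_in : s ∈ w :: qsuf := List.mem_of_getLast? hlast_wqsuf
        exact List.disjoint_of_nodup_append hQ₀nodup' hsq hs_in
      -- the rerouted path
      have hheadQ'eq : (qpre ++ w :: rsuf).head? = Q₀.head? := by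
        rw [hQsplit]; cases qpre <;> simp
      have hlastQ' : (qpre ++ w :: rsuf).getLast? = some s := by
        rw [List.getLast?_append_of_ne_nil _ (List.cons_ne_nil _ _)]
        exact hlast_wrsuf
      have hchainQ' : (qpre ++ w :: rsuf).Chain' D := by
        have h₁ := hQ₀chain; rw [hQsplit, List.Chain', List.isChain_append] at h₁
        have h₂ := hR'chain; rw [hRsplit, List.Chain', List.isChain_append] at h₂
        rw [List.Chain', List.isChain_append]
        refine ⟨h₁.1, h₂.2.1, ?_⟩
        intro x hx y hy
        simp only [List.head?_cons, Option.mem_some_iff] at hy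
        subst hy
        exact h₁.2.2 x hx w (by simp)
      have hnodupQ' : (qpre ++ w :: rsuf).Nodup := by
        rw [List.nodup_append]
        refine ⟨(List.nodup_append.mp hQ₀nodup').1, hR'nodup'.of_append_right, ?_⟩
        intro x hxq y hxw hxy
        subst hxy
        rcases List.mem_cons.mp hxw with rfl | hxrsuf
        · exact List.disjoint_of_nodup_append hQ₀nodup' hxq (by simp)
        · have hxQ₀ : x ∈ Q₀ := by rw [hQsplit]; exact List.mem_append_left _ hxq
          rcases hstar x hxrsuf with rfl | hnever
          · exact hsnqpre hxq
          · exact hnever Q₀ hQ₀Dp hxQ₀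
      -- disjointness of the rerouted path from the other paths of Dp
      have hQ'vsD : ∀ l' ∈ Dp, l' ≠ Q₀ → ∀ x, x ∈ qpre ++ w :: rsuf → x ∈ l' → x = s := by
        intro l' hl' hne x hxQ' hxl'
        rcases List.mem_append.mp hxQ' with hxq | hxw
        · exact h5 Q₀ hQ₀Dp l' hl' (Ne.symm hne) x
            (by rw [hQsplit]; exact List.mem_append_left _ hxq) hxl'
        · rcases List.mem_cons.mp hxw with rfl | hxr
          · exact h5 Q₀ hQ₀Dp l' hl' (Ne.symm hne) w (by rw [hQsplit]; simp) hxl'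
          · rcases hstar x hxr with rfl | hnever
            · rfl
            · exact absurd hxl' (hnever l' hl')
      have hQ'vsC : ∀ l ∈ C, ∀ x, x ∈ l → x ∈ qpre ++ w :: rsuf → x = s := by
        intro l hl x hxl hxQ'
        rcases List.mem_append.mp hxQ' with hxq | hxw
        · exact h6 l hl Q₀ hQ₀Dp x hxl (by rw [hQsplit]; exact List.mem_append_left _ hxq)
        · rcases List.mem_cons.mp hxw with rfl | hxr
          · exact h6 l hl Q₀ hQ₀Dp w hxl (by rw [hQsplit]; simp)
          · have hxR' : x ∈ R' := by
              rw [hRsplit]; exact List.mem_append_right _ (List.mem_cons_of_mem _ hxr)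
            have hlne : l ≠ R' := fun h => hR'nC (h ▸ hl)
            exact hnd₁ l (h1 hl) R' hR'X₁ hlne x hxl hxR'
      obtain ⟨u₀, hu₀U₂, hu₀head⟩ := hQ₀head
      have hheadQ' : (qpre ++ w :: rsuf).head? = some u₀ := by rw [hheadQ'eq]; exact hu₀head
      have hu₀Q' : u₀ ∈ qpre ++ w :: rsuf := List.mem_of_mem_head? (by rw [hheadQ']; rfl)
      have hu₀Q₀ : u₀ ∈ Q₀ := List.mem_of_mem_head? (by rw [hu₀head]; rfl)
      have hu₀ne_s : u₀ ≠ s := fun h => hs (Or.inr (h ▸ hu₀U₂))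
      have hQ'notin : (qpre ++ w :: rsuf) ∉ Dp.erase Q₀ := by
        intro hmem
        have h' := Finset.mem_erase.mp hmem
        exact hu₀ne_s (h5 _ h'.2 Q₀ hQ₀Dp h'.1 u₀ hu₀Q' hu₀Q₀)
      -- potential decreases
      have hgQ' : sInf {n | ∃ R ∈ X₁, (qpre ++ w :: rsuf).drop n <:+ R} ≤ qpre.length := by
        apply Nat.sInf_le
        refine ⟨R', hR'X₁, ?_⟩
        rw [List.drop_left]
        exact ⟨rpre, hRsplit.symm⟩
      have hgQ₀ : qpre.length < sInf {n | ∃ R ∈ X₁, Q₀.drop n <:+ R} := by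
        by_contra hle
        push_neg at hle
        obtain ⟨R₀, hR₀⟩ := hX₁ne
        have hne' : {n | ∃ R ∈ X₁, Q₀.drop n <:+ R}.Nonempty :=
          ⟨Q₀.length, R₀, hR₀, by simp⟩
        have hmem := Nat.sInf_mem hne'
        obtain ⟨L, hLX₁, hdropsfx⟩ := hmem
        have key : ∀ n, n ≤ qpre.length → (w :: qsuf) <:+ Q₀.drop n := by
          intro n hn
          rw [hQsplit, List.drop_append_of_le_length hn]
          exact ⟨qpre.drop n, rfl⟩
        have h₂ : (w :: qsuf) <:+ L :=
          List.IsSuffix.trans (key _ hle) hdropsfx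
        have hwL : w ∈ L := h₂.mem (by simp)
        have hLR' : L = R' := by
          by_contra hne''
          exact hws (hnd₁ L hLX₁ R' hR'X₁ hne'' w hwL hwR)
        subst hLR'
        obtain ⟨t, ht⟩ := h₂
        rw [hRsplit] at ht
        have hnt : (t ++ w :: qsuf).Nodup := by rw [ht]; exact hR'nodup'
        obtain ⟨-, hq⟩ := split_unique hnt ht
        exact hnotridden ⟨Q₀, hQ₀Dp, w, qsuf, hws, ⟨qpre, hQsplit.symm⟩,
          by rw [hq]; exact ⟨rpre, hRsplit.symm⟩⟩
      -- the new system
      have h3' : (insert (qpre ++ w :: rsuf) (Dp.erase Q₀)).card = ℓ₂ := by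
        rw [Finset.card_insert_of_notMem hQ'notin, Finset.card_erase_of_mem hQ₀Dp, h3]
        have : 0 < ℓ₂ := by
          rw [← h3]; exact Finset.card_pos.mpr ⟨Q₀, hQ₀Dp⟩
        omega
      have h4' : ∀ l ∈ insert (qpre ++ w :: rsuf) (Dp.erase Q₀), l.Chain' D ∧ l.Nodup ∧
          (∃ u ∈ U₂, l.head? = some u) ∧ l.getLast? = some s := by
        intro l hl
        rcases Finset.mem_insert.mp hl with rfl | hl'
        · exact ⟨hchainQ', hnodupQ', ⟨u₀, hu₀U₂, hheadQ'⟩, hlastQ'⟩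
        · exact h4 l (Finset.mem_of_mem_erase hl')
      have h5' : ∀ l ∈ insert (qpre ++ w :: rsuf) (Dp.erase Q₀),
          ∀ l' ∈ insert (qpre ++ w :: rsuf) (Dp.erase Q₀),
          l ≠ l' → ∀ x, x ∈ l → x ∈ l' → x = s := by
        intro l hl l' hl' hne x hxl hxl'
        rcases Finset.mem_insert.mp hl with rfl | hlD <;>
          rcases Finset.mem_insert.mp hl' with h' | hl'D
        · exact absurd h'.symm hne
        · exact hQ'vsD l' (Finset.mem_of_mem_erase hl'D)
            (Finset.mem_erase.mp hl'D).1 x hxl hxl'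
        · rw [h'] at hxl'
          exact hQ'vsD l (Finset.mem_of_mem_erase hlD) (Finset.mem_erase.mp hlD).1 x hxl' hxl
        · exact h5 l (Finset.mem_of_mem_erase hlD) l' (Finset.mem_of_mem_erase hl'D) hne x hxl hxl'
      have h6' : ∀ l ∈ C, ∀ l' ∈ insert (qpre ++ w :: rsuf) (Dp.erase Q₀),
          ∀ x, x ∈ l → x ∈ l' → x = s := by
        intro l hl l' hl' x hxl hxl'
        rcases Finset.mem_insert.mp hl' with rfl | hl'D
        · exact hQ'vsC l hl x hxl hxl'
        · exact h6 l hl l' (Finset.mem_of_mem_erase hl'D) x hxl hxl'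
      refine ih C (insert (qpre ++ w :: rsuf) (Dp.erase Q₀)) h1 h2 h3' h4' h5' h6' ?_
      have hsum1 : ∑ Q ∈ insert (qpre ++ w :: rsuf) (Dp.erase Q₀),
          sInf {n | ∃ R ∈ X₁, Q.drop n <:+ R} =
          sInf {n | ∃ R ∈ X₁, (qpre ++ w :: rsuf).drop n <:+ R} +
          ∑ Q ∈ Dp.erase Q₀, sInf {n | ∃ R ∈ X₁, Q.drop n <:+ R} :=
        Finset.sum_insert hQ'notin
      have hsum2 : (∑ Q ∈ Dp.erase Q₀, sInf {n | ∃ R ∈ X₁, Q.drop n <:+ R}) +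
          sInf {n | ∃ R ∈ X₁, Q₀.drop n <:+ R} =
          ∑ Q ∈ Dp, sInf {n | ∃ R ∈ X₁, Q.drop n <:+ R} :=
        Finset.sum_erase_add Dp _ hQ₀Dp
      omega

/-- Rerouting of nearly disjoint directed path systems
(Conforti–Hassin–Ravi).  A directed path is encoded as a nonempty list of vertices,
forming a chain of the edge relation `D`, with no repeated vertices. -/
theorem stmt12 {V : Type} (D : V → V → Prop) (U₁ U₂ : Set V) (s : V)
    (hs : s ∉ U₁ ∪ U₂)
    (X₁ X₂ : Finset (List V)) (ℓ₁ ℓ₂ : ℕ)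
    (hX₁card : X₁.card = ℓ₁) (hX₂card : X₂.card = ℓ₂)
    (hℓ : ℓ₂ < ℓ₁) (hℓ2 : 1 ≤ ℓ₂)
    (hX₁ : ∀ l ∈ X₁, l.Chain' D ∧ l.Nodup ∧
      (∃ u ∈ U₁, l.head? = some u) ∧ l.getLast? = some s)
    (hX₂ : ∀ l ∈ X₂, l.Chain' D ∧ l.Nodup ∧
      (∃ u ∈ U₂, l.head? = some u) ∧ l.getLast? = some s)
    (hnd₁ : ∀ l ∈ X₁, ∀ l' ∈ X₁, l ≠ l' → ∀ x, x ∈ l → x ∈ l' → x = s)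
    (hnd₂ : ∀ l ∈ X₂, ∀ l' ∈ X₂, l ≠ l' → ∀ x, x ∈ l → x ∈ l' → x = s) :
    ∃ X'₁ X'₂ : Finset (List V),
      Disjoint X'₁ X'₂ ∧
      (X'₁ ∪ X'₂).card = ℓ₁ ∧
      X'₂.card = ℓ₂ ∧
      X'₁ ⊆ X₁ ∧
      (∀ l ∈ X'₂, ∃ u ∈ U₂, l.head? = some u) ∧
      (∀ l ∈ X'₁ ∪ X'₂, l.Chain' D ∧ l.Nodup ∧
        (∃ u ∈ U₁ ∪ U₂, l.head? = some u) ∧ l.getLast? = some s) ∧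
      (∀ l ∈ X'₁ ∪ X'₂, ∀ l' ∈ X'₁ ∪ X'₂, l ≠ l' → ∀ x, x ∈ l → x ∈ l' → x = s) := by
  have hX₁ne : X₁.Nonempty := by
    rw [← Finset.card_pos, hX₁card]; omega
  exact reroute_main D U₁ U₂ s hs X₁ ℓ₁ ℓ₂ hX₁card hX₁ hnd₁ hX₁ne
    ((ℓ₁ - ℓ₂ - (∅ : Finset (List V)).card) +
      (∑ Q ∈ X₂, sInf {n | ∃ R ∈ X₁, Q.drop n <:+ R}))
    ∅ X₂ (Finset.empty_subset _) (by simp; omega) hX₂card hX₂ hnd₂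
    (by intro l hl; simp at hl) le_rfl
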